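/- Converse of cone extension (single vertex addition): let G be a real symmetric N×N matrix with cospectral vertices u, v, let g ∈ ℝ^N, and let H = [[G, g],[g^T, 0]] be the weighted cone. If u and v are cospectral in H (i.e., (H^k)_{uu} = (H^k)_{vv} for all k ∈ ℕ), then there exists p ∈ {+1,−1} such that (G^k g)_u = p·(G^k g)_v for all non-negative integers k, i.e., g is the weighted indicator vector of a walk multiplet relative to (u,v). -/

import Mathlib

open Matrix Finset

/-- Triangle reindexing for double sums over `ℕ` ranges. -/
lemma stmt11_triSum (f : ℕ → ℕ → ℝ) (n : ℕ) :
    ∑ a ∈ range n, ∑ b ∈ range (n - a), f a b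
      = ∑ m ∈ range n, ∑ a ∈ range (m + 1), f a (m - a) := by
  induction n with
  | zero => simp
  | succ n ih =>
    rw [Finset.sum_range_succ (f := fun m => ∑ a ∈ range (m+1), f a (m - a))]
    rw [Finset.sum_range_succ]
    have h1 : ∀ a ∈ range n, ∑ b ∈ range (n + 1 - a), f a b
        = (∑ b ∈ range (n - a), f a b) + f a (n - a) := by
      intro a ha
      have : n + 1 - a = (n - a) + 1 := by
        have := Finset.mem_range.mp ha; omega
      rw [this, Finset.sum_range_succ]
    rw [Finset.sum_congr rfl h1, Finset.sum_add_distrib, ih]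
    have : ∑ b ∈ range (n + 1 - n), f n b = f n (n - n) := by simp
    rw [this, Finset.sum_range_succ]
    ring

/-- The top-left block sequence of powers of the cone matrix. -/
def coneA {N : ℕ} (G : Matrix (Fin N) (Fin N) ℝ) (g : Fin N → ℝ) :
    ℕ → Matrix (Fin N) (Fin N) ℝ
  | 0 => 1
  | 1 => G
  | (n+2) => G * coneA G g (n+1) + Matrix.vecMulVec g g * coneA G g n

@[simp] lemma coneA_zero {N : ℕ} (G : Matrix (Fin N) (Fin N) ℝ) (g : Fin N → ℝ) :
    coneA G g 0 = 1 := rfl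
@[simp] lemma coneA_one {N : ℕ} (G : Matrix (Fin N) (Fin N) ℝ) (g : Fin N → ℝ) :
    coneA G g 1 = G := rfl
lemma coneA_two {N : ℕ} (G : Matrix (Fin N) (Fin N) ℝ) (g : Fin N → ℝ) (n : ℕ) :
    coneA G g (n+2) = G * coneA G g (n+1) + Matrix.vecMulVec g g * coneA G g n := rfl

lemma coneBC {N : ℕ} (g : Fin N → ℝ) :
    (Matrix.of fun i (_ : Unit) => g i) * (Matrix.of fun (_ : Unit) j => g j)
      = Matrix.vecMulVec g g := by
  ext i j
  simp [Matrix.mul_apply, Matrix.vecMulVec]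

lemma coneH_pow {N : ℕ} (G : Matrix (Fin N) (Fin N) ℝ) (g : Fin N → ℝ) (k : ℕ) :
    (Matrix.fromBlocks G (Matrix.of fun i (_ : Unit) => g i)
        (Matrix.of fun (_ : Unit) j => g j) 0) ^ (k + 2)
      = Matrix.fromBlocks (coneA G g (k+2)) (coneA G g (k+1) * (Matrix.of fun i (_ : Unit) => g i))
        ((Matrix.of fun (_ : Unit) j => g j) * coneA G g (k+1))
        ((Matrix.of fun (_ : Unit) j => g j) * (coneA G g k * (Matrix.of fun i (_ : Unit) => g i))) := by
  induction k with
  | zero =>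
    rw [pow_two, Matrix.fromBlocks_multiply, coneA_two]
    simp only [coneA_zero, coneA_one, Matrix.mul_zero, Matrix.zero_mul, add_zero,
      Matrix.mul_one, Matrix.one_mul, coneBC]
    rfl
  | succ n ih =>
    rw [show n + 1 + 2 = (n + 2) + 1 from rfl, pow_succ', ih, Matrix.fromBlocks_multiply]
    have h11 : G * coneA G g (n+2)
        + (Matrix.of fun i (_ : Unit) => g i) * ((Matrix.of fun (_ : Unit) j => g j) * coneA G g (n+1))
        = coneA G g (n+3) := by
      rw [← Matrix.mul_assoc, coneBC]
      rfl
    have h12 : G * (coneA G g (n+1) * (Matrix.of fun i (_ : Unit) => g i))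
        + (Matrix.of fun i (_ : Unit) => g i) * ((Matrix.of fun (_ : Unit) j => g j) * (coneA G g n * (Matrix.of fun i (_ : Unit) => g i)))
        = coneA G g (n+2) * (Matrix.of fun i (_ : Unit) => g i) := by
      rw [← Matrix.mul_assoc, ← Matrix.mul_assoc, coneBC, ← Matrix.mul_assoc,
        coneA_two, Matrix.add_mul, Matrix.mul_assoc]
    rw [h11, h12]
    simp

/-- Unrolled form of the recursion for `coneA`. -/
lemma coneA_eq {N : ℕ} (G : Matrix (Fin N) (Fin N) ℝ) (g : Fin N → ℝ) (k : ℕ) :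
    coneA G g k = G ^ k
      + ∑ a ∈ Finset.range (k-1), G ^ a * Matrix.vecMulVec g g * coneA G g (k-2-a) := by
  have key : ∀ n : ℕ, coneA G g (n+1) = G ^ (n+1)
      + ∑ a ∈ Finset.range n, G ^ a * Matrix.vecMulVec g g * coneA G g (n-1-a) := by
    intro n
    induction n with
    | zero => simp
    | succ n ih =>
      show coneA G g (n+2) = _
      rw [coneA_two, ih]
      rw [Finset.sum_range_succ' (fun a => G ^ a * Matrix.vecMulVec g g * coneA G g (n+1-1-a)) n]
      simp only [Nat.add_sub_cancel, Nat.sub_zero, pow_zero, Matrix.one_mul, Matrix.mul_add,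
        Finset.mul_sum]
      rw [← pow_succ']
      have : ∀ a ∈ Finset.range n, G * (G ^ a * Matrix.vecMulVec g g * coneA G g (n-1-a))
          = G ^ (a+1) * Matrix.vecMulVec g g * coneA G g (n - (a+1)) := by
        intro a ha
        have h1 : n - (a + 1) = n - 1 - a := by omega
        rw [h1, pow_succ', Matrix.mul_assoc, Matrix.mul_assoc, Matrix.mul_assoc]
      rw [Finset.sum_congr rfl this]
      abel
  match k with
  | 0 => simp
  | (n+1) =>
    have e2 : ∀ a : ℕ, n + 1 - 2 - a = n - 1 - a := fun a => by omega
    simp only [Nat.add_sub_cancel, e2]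
    exact key n

lemma stmt11_entry_helper {N : ℕ} (g : Fin N → ℝ) (M P : Matrix (Fin N) (Fin N) ℝ) (x y : Fin N) :
    (M * Matrix.vecMulVec g g * P) x y = M.mulVec g x * Matrix.vecMul g P y := by
  simp only [Matrix.mul_apply, Matrix.vecMulVec_apply, Matrix.mulVec, Matrix.vecMul,
    dotProduct, Finset.sum_mul, Finset.mul_sum]
  apply Finset.sum_congr rfl; intro z _
  apply Finset.sum_congr rfl; intro w _
  ring

lemma stmt11_mv_helper {N : ℕ} (g w : Fin N → ℝ) (M P : Matrix (Fin N) (Fin N) ℝ) (x : Fin N) :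
    ((M * Matrix.vecMulVec g g * P).mulVec w) x = M.mulVec g x * (g ⬝ᵥ P.mulVec w) := by
  have key : ∀ y, (M * Matrix.vecMulVec g g * P) x y * w y
      = M.mulVec g x * (Matrix.vecMul g P y * w y) := by
    intro y; rw [stmt11_entry_helper]; ring
  show ∑ y, (M * Matrix.vecMulVec g g * P) x y * w y = _
  rw [Finset.sum_congr rfl (fun y _ => key y), ← Finset.mul_sum]
  congr 1
  rw [Matrix.dotProduct_mulVec]
  rfl

lemma stmt11_sum_mulVec {N : ℕ} {ι : Type*} (s : Finset ι)
    (M : ι → Matrix (Fin N) (Fin N) ℝ) (w : Fin N → ℝ) (x : Fin N) :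
    ((∑ i ∈ s, M i).mulVec w) x = ∑ i ∈ s, (M i).mulVec w x := by
  simp only [Matrix.mulVec, dotProduct, Matrix.sum_apply, Finset.sum_mul]
  rw [Finset.sum_comm]

/-- Converse of cone extension: if the cospectral pair `u, v` of `G` remains
cospectral in the weighted cone `H = [[G, g],[gᵀ, 0]]`, then `g` is the weighted
indicator vector of a walk multiplet relative to `(u,v)` for some parity `p = ±1`. -/
theorem stmt11 {N : ℕ} (G : Matrix (Fin N) (Fin N) ℝ) (hsymm : G.IsSymm)
    (u v : Fin N) (g : Fin N → ℝ)
    (hcosp : ∀ k : ℕ, (G ^ k) u u = (G ^ k) v v)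
    (H : Matrix (Fin N ⊕ Unit) (Fin N ⊕ Unit) ℝ)
    (hH : H = Matrix.fromBlocks G (Matrix.of fun i _ => g i)
      (Matrix.of fun _ j => g j) 0)
    (hcospH : ∀ k : ℕ, (H ^ k) (Sum.inl u) (Sum.inl u)
      = (H ^ k) (Sum.inl v) (Sum.inl v)) :
    ∃ p : ℝ, (p = 1 ∨ p = -1) ∧
      ∀ k : ℕ, ((G ^ k).mulVec g) u = p * ((G ^ k).mulVec g) v := by
  subst hH
  -- symmetry of H and of coneA
  have hHsym : (Matrix.fromBlocks G (Matrix.of fun i (_ : Unit) => g i)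
      (Matrix.of fun (_ : Unit) j => g j) (0 : Matrix Unit Unit ℝ)).IsSymm := by
    rw [Matrix.IsSymm, Matrix.fromBlocks_transpose]
    have hB : (Matrix.of fun (_ : Unit) j => g j)ᵀ = (Matrix.of fun i (_ : Unit) => g i) := by
      ext i j; rfl
    have hC : (Matrix.of fun i (_ : Unit) => g i)ᵀ = (Matrix.of fun (_ : Unit) j => g j) := by
      ext i j; rfl
    rw [hB, hC, hsymm, Matrix.transpose_zero]
  have hAsymm : ∀ k x y, coneA G g k x y = coneA G g k y x := by
    intro k
    match k with
    | 0 => intro x y; simp [Matrix.one_apply, eq_comm]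
    | 1 => intro x y; show G x y = G y x; exact hsymm.apply y x
    | (n+2) =>
      intro x y
      have hp := (hHsym.pow (n+2))
      have h1 : coneA G g (n+2) x y
          = ((Matrix.fromBlocks G (Matrix.of fun i (_ : Unit) => g i)
              (Matrix.of fun (_ : Unit) j => g j) 0) ^ (n+2)) (Sum.inl x) (Sum.inl y) := by
        rw [coneH_pow]; rfl
      have h2 : coneA G g (n+2) y x
          = ((Matrix.fromBlocks G (Matrix.of fun i (_ : Unit) => g i)
              (Matrix.of fun (_ : Unit) j => g j) 0) ^ (n+2)) (Sum.inl y) (Sum.inl x) := by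
        rw [coneH_pow]; rfl
      rw [h1, h2, hp.apply]
  -- cospectrality transfers to coneA
  have hdiagH : ∀ k, coneA G g k u u = coneA G g k v v := by
    intro k
    match k with
    | 0 => simp [Matrix.one_apply]
    | 1 => simpa using hcosp 1
    | (n+2) =>
      have := hcospH (n+2)
      rw [coneH_pow] at this
      simpa using this
  -- diagonal expansion
  have hdiag : ∀ (k : ℕ) (x : Fin N), coneA G g k x x = (G ^ k) x x
      + ∑ a ∈ range (k-1), (G ^ a).mulVec g x * (coneA G g (k-2-a)).mulVec g x := by
    intro k x
    conv_lhs => rw [coneA_eq]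
    rw [Matrix.add_apply, Matrix.sum_apply]
    congr 1
    apply Finset.sum_congr rfl
    intro a _
    rw [stmt11_entry_helper]
    congr 1
    simp only [Matrix.vecMul, Matrix.mulVec, dotProduct]
    apply Finset.sum_congr rfl
    intro z _
    rw [hAsymm]
    ring
  -- mulVec expansion
  have hphi : ∀ (k : ℕ) (x : Fin N), (coneA G g k).mulVec g x = (G ^ k).mulVec g x
      + ∑ a ∈ range (k-1), (G ^ a).mulVec g x * (g ⬝ᵥ (coneA G g (k-2-a)).mulVec g) := by
    intro k x
    conv_lhs => rw [coneA_eq]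
    rw [Matrix.add_mulVec, Pi.add_apply, stmt11_sum_mulVec]
    congr 1
    apply Finset.sum_congr rfl
    intro a _
    rw [stmt11_mv_helper]
  -- the key convolution identity
  have hDkey : ∀ n : ℕ,
      ∑ i ∈ range (n+1), (G ^ i).mulVec g u * (G ^ (n-i)).mulVec g u
        = ∑ i ∈ range (n+1), (G ^ i).mulVec g v * (G ^ (n-i)).mulVec g v := by
    intro n
    induction n using Nat.strong_induction_on with
    | _ n IH =>
    have heq : ∑ a ∈ range (n+1), (G ^ a).mulVec g u * (coneA G g (n-a)).mulVec g u
             = ∑ a ∈ range (n+1), (G ^ a).mulVec g v * (coneA G g (n-a)).mulVec g v := by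
      have h2 := hdiagH (n+2)
      rw [hdiag (n+2) u, hdiag (n+2) v] at h2
      have h3 := hcosp (n+2)
      have e1 : n + 2 - 1 = n + 1 := rfl
      have e2 : ∀ a : ℕ, n + 2 - 2 - a = n - a := fun a => by omega
      simp only [e1, e2] at h2
      linarith
    have hexp : ∀ x : Fin N,
        (∑ a ∈ range (n+1), (G ^ a).mulVec g x * (coneA G g (n-a)).mulVec g x)
        = (∑ a ∈ range (n+1), (G ^ a).mulVec g x * (G ^ (n-a)).mulVec g x)
        + ∑ m ∈ range (n-1), (∑ i ∈ range (m+1),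
            (G ^ i).mulVec g x * (G ^ (m-i)).mulVec g x)
              * (g ⬝ᵥ (coneA G g (n-2-m)).mulVec g) := by
      intro x
      have hterm : ∀ a ∈ range (n+1), (G ^ a).mulVec g x * (coneA G g (n-a)).mulVec g x
          = (G ^ a).mulVec g x * (G ^ (n-a)).mulVec g x
            + ∑ b ∈ range ((n-a)-1),
                (G ^ a).mulVec g x * (G ^ b).mulVec g x
                  * (g ⬝ᵥ (coneA G g ((n-a)-2-b)).mulVec g) := by
        intro a _
        rw [hphi (n-a) x, mul_add, Finset.mul_sum]
        congr 1
        apply Finset.sum_congr rfl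
        intro b _
        ring
      rw [Finset.sum_congr rfl hterm, Finset.sum_add_distrib]
      congr 1
      have hshrink : ∑ a ∈ range (n+1), ∑ b ∈ range ((n-a)-1),
            (G ^ a).mulVec g x * (G ^ b).mulVec g x * (g ⬝ᵥ (coneA G g ((n-a)-2-b)).mulVec g)
          = ∑ a ∈ range (n-1), ∑ b ∈ range ((n-1)-a),
            (G ^ a).mulVec g x * (G ^ b).mulVec g x * (g ⬝ᵥ (coneA G g ((n-a)-2-b)).mulVec g) := by
        rw [← Finset.sum_subset (Finset.range_subset_range.mpr (by omega : n - 1 ≤ n + 1))]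
        · apply Finset.sum_congr rfl
          intro a ha
          have hlt := Finset.mem_range.mp ha
          have : (n-a)-1 = (n-1)-a := by omega
          rw [this]
        · intro a ha ha2
          have h1 := Finset.mem_range.mp ha
          have h2 : ¬ a < n - 1 := fun h => ha2 (Finset.mem_range.mpr h)
          have : (n - a) - 1 = 0 := by omega
          rw [this]
          simp
      rw [hshrink, stmt11_triSum
        (fun a b => (G ^ a).mulVec g x * (G ^ b).mulVec g x
          * (g ⬝ᵥ (coneA G g ((n-a)-2-b)).mulVec g)) (n-1)]
      apply Finset.sum_congr rfl
      intro m hm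
      rw [Finset.sum_mul]
      apply Finset.sum_congr rfl
      intro i hi
      have hm' := Finset.mem_range.mp hm
      have hi' := Finset.mem_range.mp hi
      have : (n - i) - 2 - (m - i) = n - 2 - m := by omega
      rw [this]
    rw [hexp u, hexp v] at heq
    have hw : ∑ m ∈ range (n-1), (∑ i ∈ range (m+1),
          (G ^ i).mulVec g u * (G ^ (m-i)).mulVec g u) * (g ⬝ᵥ (coneA G g (n-2-m)).mulVec g)
        = ∑ m ∈ range (n-1), (∑ i ∈ range (m+1),
          (G ^ i).mulVec g v * (G ^ (m-i)).mulVec g v) * (g ⬝ᵥ (coneA G g (n-2-m)).mulVec g) := by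
      apply Finset.sum_congr rfl
      intro m hm
      have hmn : m < n := by
        have := Finset.mem_range.mp hm; omega
      rw [IH m hmn]
    linarith
  -- power series finish
  have hPQ : (PowerSeries.mk (fun k => (G ^ k).mulVec g u)) * (PowerSeries.mk (fun k => (G ^ k).mulVec g u))
      = (PowerSeries.mk (fun k => (G ^ k).mulVec g v)) * (PowerSeries.mk (fun k => (G ^ k).mulVec g v)) := by
    ext n
    rw [PowerSeries.coeff_mul, PowerSeries.coeff_mul,
      Finset.Nat.sum_antidiagonal_eq_sum_range_succ_mk,
      Finset.Nat.sum_antidiagonal_eq_sum_range_succ_mk]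
    simpa [PowerSeries.coeff_mk] using hDkey n
  rcases mul_self_eq_mul_self_iff.mp hPQ with h | h
  · refine ⟨1, Or.inl rfl, fun k => ?_⟩
    have := congrArg (PowerSeries.coeff k) h
    simpa [PowerSeries.coeff_mk] using this
  · refine ⟨-1, Or.inr rfl, fun k => ?_⟩
    have := congrArg (PowerSeries.coeff k) h
    simp only [PowerSeries.coeff_mk, map_neg, PowerSeries.coeff_mk] at this
    linarith
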